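/- Let γ > −1 and δ ∈ ℝ. The Wright function z ↦ W(z; γ, δ) is differentiable on ℝ and its derivative satisfies (d/dz) W(z; γ, δ) = W(z; γ, γ + δ) for every real z. -/

import Mathlib

open Real Filter

lemma gamma_mono {a b : ℝ} (h2 : 2 ≤ a) (hab : a ≤ b) : Gamma a ≤ Gamma b :=
  Real.Gamma_strictMonoOn_Ici.monotoneOn h2 (h2.trans hab) hab

lemma Gamma_three_eq : Gamma 3 = 2 := by
  have := Real.Gamma_nat_eq_factorial 2
  norm_num at this
  convert this using 2 <;> norm_num

lemma Gamma_le_one_of_Icc {x : ℝ} (h1 : 1 ≤ x) (h2 : x ≤ 2) : Gamma x ≤ 1 := by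
  have h := convexOn_Gamma.2 (Set.mem_Ioi.mpr one_pos) (Set.mem_Ioi.mpr two_pos)
    (by linarith : (0:ℝ) ≤ 2 - x) (by linarith : (0:ℝ) ≤ x - 1) (by ring)
  simp only [smul_eq_mul] at h
  have hx : (2 - x) * (1:ℝ) + (x - 1) * (2:ℝ) = x := by ring
  rw [hx, Real.Gamma_one, Real.Gamma_two] at h
  linarith

lemma half_le_Gamma {x : ℝ} (h1 : 1 ≤ x) : (1:ℝ)/2 ≤ Gamma x := by
  rcases le_or_gt 2 x with h2 | h2
  · have := gamma_mono le_rfl h2; rw [Real.Gamma_two] at this; linarith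
  · have hθ : (0:ℝ) < 3 - x := by linarith
    have h := convexOn_log_Gamma.2 (Set.mem_Ioi.mpr (by linarith : (0:ℝ) < x))
      (Set.mem_Ioi.mpr (by norm_num : (0:ℝ) < 3))
      (by positivity : (0:ℝ) ≤ (3 - x)⁻¹)
      (by
        have h2x : (0:ℝ) ≤ 2 - x := by linarith
        positivity : (0:ℝ) ≤ (2 - x) / (3 - x))
      (by field_simp; ring)
    simp only [Function.comp_apply, smul_eq_mul] at h
    have hcombo : (3 - x)⁻¹ * x + (2 - x) / (3 - x) * 3 = 2 := by field_simp; ring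
    rw [hcombo, Real.Gamma_two, Gamma_three_eq, Real.log_one] at h
    have hlog : -Real.log 2 ≤ Real.log (Gamma x) := by
      have hl2 : (0:ℝ) ≤ Real.log 2 := Real.log_nonneg (by norm_num)
      have h' := mul_le_mul_of_nonneg_left h (le_of_lt hθ)
      rw [mul_zero, mul_add] at h'
      have e1 : (3 - x) * ((3 - x)⁻¹ * Real.log (Gamma x)) = Real.log (Gamma x) := by
        field_simp
      have e2 : (3 - x) * ((2 - x) / (3 - x) * Real.log 2) = (2 - x) * Real.log 2 := by
        field_simp
      rw [e1, e2] at h'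
      nlinarith
    have hpos : 0 < Gamma x := Real.Gamma_pos_of_pos (by linarith)
    have hh := Real.exp_le_exp.mpr hlog
    rw [Real.exp_log hpos] at hh
    have he : Real.exp (-Real.log 2) = 1/2 := by
      rw [Real.exp_neg, Real.exp_log two_pos]; norm_num
    linarith [he ▸ hh]

lemma abs_inv_Gamma_of_nonpos {x : ℝ} (hx : x ≤ 0) : |(Gamma x)⁻¹| ≤ Gamma (1 - x) := by
  have hpos : 0 < Gamma (1 - x) := Real.Gamma_pos_of_pos (by linarith)
  by_cases hΓ : Gamma x = 0
  · simp [hΓ]; positivity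
  · have h := Real.Gamma_mul_Gamma_one_sub x
    have hs : Real.sin (π * x) ≠ 0 := by
      intro h0
      rw [h0, div_zero] at h
      exact (mul_ne_zero hΓ hpos.ne') h
    have key : (Gamma x)⁻¹ = Real.sin (π * x) * Gamma (1 - x) / π := by
      have hπ : (π : ℝ) ≠ 0 := Real.pi_ne_zero
      field_simp at h ⊢
      rw [h, div_mul_cancel₀ _ (by rwa [mul_comm] at hs)]
    rw [key, abs_div, abs_mul, abs_of_pos hpos, abs_of_pos Real.pi_pos]
    have hsin : |Real.sin (π * x)| ≤ 1 :=
      abs_le.mpr ⟨Real.neg_one_le_sin _, Real.sin_le_one _⟩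
    rw [div_le_iff₀ Real.pi_pos]
    nlinarith [Real.pi_gt_three, abs_nonneg (Real.sin (π * x))]

lemma inv_Gamma_le_two_of_pos {x : ℝ} (hx : 0 < x) : (Gamma x)⁻¹ ≤ 2 := by
  rcases le_or_gt 1 x with h1 | h1
  · have h := half_le_Gamma h1
    have hpos : 0 < Gamma x := Real.Gamma_pos_of_pos hx
    rw [inv_le_comm₀ (by positivity) (by norm_num)]
    linarith
  · have hrec : Gamma (x + 1) = x * Gamma x := Real.Gamma_add_one hx.ne'
    have h1' : (1:ℝ) ≤ x + 1 := by linarith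
    have h := half_le_Gamma h1'
    have hpos : 0 < Gamma x := Real.Gamma_pos_of_pos hx
    have hpos1 : 0 < Gamma (x + 1) := Real.Gamma_pos_of_pos (by linarith)
    have : (Gamma x)⁻¹ = x * (Gamma (x + 1))⁻¹ := by
      rw [hrec]; field_simp
    rw [this]
    have : (Gamma (x+1))⁻¹ ≤ 2 := by rw [inv_le_comm₀ (by positivity) (by norm_num)]; linarith
    nlinarith

lemma abs_inv_Gamma_le (x : ℝ) : |(Gamma x)⁻¹| ≤ 3 * Gamma (max (1 - x) 2) := by
  have hmax2 : (2:ℝ) ≤ max (1 - x) 2 := le_max_right _ _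
  have hΓmax : (1:ℝ) ≤ Gamma (max (1 - x) 2) := by
    have := gamma_mono le_rfl hmax2
    rwa [Real.Gamma_two] at this
  rcases le_or_gt x 0 with hx | hx
  · have h := abs_inv_Gamma_of_nonpos hx
    rcases le_or_gt 2 (1 - x) with h2 | h2
    · rw [max_eq_left h2]
      have := Real.Gamma_pos_of_pos (by linarith : (0:ℝ) < 1 - x)
      linarith
    · have hle1 : Gamma (1 - x) ≤ 1 := Gamma_le_one_of_Icc (by linarith) (by linarith)
      linarith
  · have hΓ : 0 < Gamma x := Real.Gamma_pos_of_pos hx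
    rw [abs_of_nonneg (by positivity : (0:ℝ) ≤ (Gamma x)⁻¹)]
    have := inv_Gamma_le_two_of_pos hx
    linarith

lemma gautschi {y a : ℝ} (hy : 0 < y) (ha0 : 0 ≤ a) (ha1 : a ≤ 1) :
    Gamma (y + a) ≤ Gamma y * y ^ a := by
  have h := convexOn_log_Gamma.2 (Set.mem_Ioi.mpr hy)
    (Set.mem_Ioi.mpr (by linarith : (0:ℝ) < y + 1))
    (by linarith : (0:ℝ) ≤ 1 - a) ha0 (by ring)
  simp only [Function.comp_apply, smul_eq_mul] at h
  have hcombo : (1 - a) * y + a * (y + 1) = y + a := by ring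
  rw [hcombo] at h
  have hΓy : 0 < Gamma y := Real.Gamma_pos_of_pos hy
  have hrec : Gamma (y + 1) = y * Gamma y := Real.Gamma_add_one hy.ne'
  rw [hrec, Real.log_mul hy.ne' hΓy.ne'] at h
  have h' : Real.log (Gamma (y + a)) ≤ Real.log (Gamma y) + a * Real.log y := by
    nlinarith
  have hpos : 0 < Gamma (y + a) := Real.Gamma_pos_of_pos (by linarith)
  calc Gamma (y + a) = Real.exp (Real.log (Gamma (y + a))) := (Real.exp_log hpos).symm
    _ ≤ Real.exp (Real.log (Gamma y) + a * Real.log y) := Real.exp_le_exp.mpr h'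
    _ = Gamma y * y ^ a := by
        rw [Real.exp_add, Real.exp_log hΓy, Real.rpow_def_of_pos hy, mul_comm (Real.log y) a]

lemma summable_majorant {α K R : ℝ} (hα0 : 0 ≤ α) (hα1 : α < 1) (hK : 2 ≤ K) (hR : 1 ≤ R) :
    Summable (fun n : ℕ => (n : ℝ) * R ^ n * Gamma (α * n + K) / n.factorial) := by
  set f : ℕ → ℝ := fun n => (n : ℝ) * R ^ n * Gamma (α * n + K) / n.factorial with hf
  have hΓpos : ∀ n : ℕ, 0 < Gamma (α * n + K) := fun n =>
    Real.Gamma_pos_of_pos (by positivity)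
  apply summable_of_ratio_norm_eventually_le (r := 1/2) (by norm_num : (1:ℝ)/2 < 1)
  have hinf : Tendsto (fun n : ℕ => (n : ℝ) ^ (1 - α)) atTop atTop :=
    (tendsto_rpow_atTop (by linarith)).comp tendsto_natCast_atTop_atTop
  filter_upwards [hinf.eventually_ge_atTop (2 * R * (α + K) ^ α), eventually_ge_atTop 1]
    with n hn hn1
  have hnR : (1:ℝ) ≤ (n : ℝ) := by exact_mod_cast hn1
  have hnpos : (0:ℝ) < n := by linarith
  have hfact : (0:ℝ) < n.factorial := by positivity
  -- key : R * Γ(αn+K+α) ≤ (n/2) Γ(αn+K)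
  have hy : (0:ℝ) < α * n + K := by positivity
  have hgaut : Gamma ((α * n + K) + α) ≤ Gamma (α * n + K) * (α * n + K) ^ α :=
    gautschi hy hα0 hα1.le
  have hbase : α * n + K ≤ (α + K) * n := by nlinarith
  have hrpow1 : (α * n + K) ^ α ≤ ((α + K) * n) ^ α :=
    Real.rpow_le_rpow hy.le hbase hα0
  have hrpow2 : ((α + K) * n) ^ α = (α + K) ^ α * (n : ℝ) ^ α :=
    Real.mul_rpow (by positivity) hnpos.le
  have hnn : (n : ℝ) ^ (1 - α) * (n : ℝ) ^ α = n := by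
    rw [← Real.rpow_add hnpos]; simp
  have hkey : 2 * R * (α + K) ^ α * (n : ℝ) ^ α ≤ n := by
    calc 2 * R * (α + K) ^ α * (n : ℝ) ^ α ≤ (n : ℝ) ^ (1 - α) * (n : ℝ) ^ α := by
          apply mul_le_mul_of_nonneg_right hn (by positivity)
      _ = n := hnn
  have hmain : R * Gamma ((α * n + K) + α) ≤ (n / 2) * Gamma (α * n + K) := by
    have h1 : R * Gamma ((α * n + K) + α) ≤ R * (Gamma (α * n + K) * ((α + K) ^ α * (n : ℝ) ^ α)) := by
      have := hgaut.trans (by nlinarith [hΓpos n, hrpow1] :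
        Gamma (α * n + K) * (α * n + K) ^ α ≤ Gamma (α * n + K) * ((α + K) ^ α * (n : ℝ) ^ α))
      nlinarith [this, hΓpos n]
    have h2 : R * (Gamma (α * n + K) * ((α + K) ^ α * (n : ℝ) ^ α)) ≤ (n / 2) * Gamma (α * n + K) := by
      have := mul_le_mul_of_nonneg_right hkey (hΓpos n).le
      nlinarith [this]
    linarith
  -- now the ratio bound
  have hfn1 : f (n + 1) = R ^ (n + 1) * Gamma (α * n + K + α) / n.factorial := by
    rw [hf]
    simp only [Nat.factorial_succ, Nat.cast_succ, Nat.cast_mul]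
    have : α * ((n : ℝ) + 1) + K = α * n + K + α := by ring
    rw [this]
    field_simp
  have hfn : f n = (n : ℝ) * R ^ n * Gamma (α * n + K) / n.factorial := rfl
  rw [hfn1, Real.norm_eq_abs, Real.norm_eq_abs,
    abs_of_nonneg (by positivity), abs_of_nonneg (by positivity : (0:ℝ) ≤ f n)]
  rw [hfn, div_le_iff₀ hfact]
  have hRp : (0:ℝ) < R ^ n := by positivity
  calc R ^ (n + 1) * Gamma (α * n + K + α)
      = R ^ n * (R * Gamma (α * n + K + α)) := by ring
    _ ≤ R ^ n * ((n / 2) * Gamma (α * n + K)) := by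
        exact mul_le_mul_of_nonneg_left hmain hRp.le
    _ = 1 / 2 * ((n : ℝ) * R ^ n * Gamma (α * n + K) / n.factorial) * n.factorial := by
        field_simp

/-- The two-parameter Wright function `W(z; γ, δ) = ∑ₖ zᵏ / (k! Γ(γk + δ))`,
where `1/Γ` is the entire reciprocal gamma function (Mathlib's `Real.Gamma`
vanishes at nonpositive integers, so division by it realizes this convention). -/
noncomputable def wright (γ δ z : ℝ) : ℝ :=
  ∑' k : ℕ, z ^ k / ((k.factorial : ℝ) * Real.Gamma (γ * k + δ))

/-- For `γ > −1`, the Wright function `z ↦ W(z; γ, δ)` is differentiable on `ℝ`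
with `(d/dz) W(z; γ, δ) = W(z; γ, γ + δ)`. -/
theorem wright_hasDerivAt (γ δ : ℝ) (hγ : -1 < γ) (z : ℝ) :
    HasDerivAt (fun z => wright γ δ z) (wright γ (γ + δ) z) z := by
  have habsδ : 0 ≤ |δ| := abs_nonneg δ
  have habsz : 0 ≤ |z| := abs_nonneg z
  set α : ℝ := max (-γ) 0 with hαdef
  have hα0 : 0 ≤ α := le_max_right _ _
  have hα1 : α < 1 := max_lt (by linarith) one_pos
  set K : ℝ := |δ| + 3 with hKdef
  have hK : 2 ≤ K := by simp only [hKdef]; linarith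
  set R : ℝ := |z| + 1 with hRdef
  have hR : 1 ≤ R := by simp only [hRdef]; linarith
  set g : ℕ → ℝ → ℝ :=
    fun n y => y ^ n / ((n.factorial : ℝ) * Real.Gamma (γ * n + δ)) with hgdef
  set g' : ℕ → ℝ → ℝ :=
    fun n y => ((n : ℝ) * y ^ (n - 1)) / ((n.factorial : ℝ) * Real.Gamma (γ * n + δ)) with hg'def
  set u : ℕ → ℝ := fun n => (n : ℝ) * R ^ n * (3 * Gamma (α * n + K)) / n.factorial with hudef
  have hfactpos : ∀ n : ℕ, (0:ℝ) < n.factorial := fun n => by positivity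
  have hΓKpos : ∀ n : ℕ, 0 < Gamma (α * n + K) := fun n =>
    Real.Gamma_pos_of_pos (by positivity)
  -- bound on the inverse coefficient
  have hcbound : ∀ n : ℕ, |(((n.factorial : ℝ) * Gamma (γ * n + δ)))⁻¹| ≤
      3 * Gamma (α * n + K) / n.factorial := by
    intro n
    rw [mul_inv, abs_mul, abs_of_nonneg (by positivity : (0:ℝ) ≤ ((n.factorial : ℝ))⁻¹)]
    have h1 : |(Gamma (γ * n + δ))⁻¹| ≤ 3 * Gamma (max (1 - (γ * n + δ)) 2) :=
      abs_inv_Gamma_le _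
    have h2 : Gamma (max (1 - (γ * n + δ)) 2) ≤ Gamma (α * n + K) := by
      apply gamma_mono (le_max_right _ _)
      apply max_le
      · have hn : (0:ℝ) ≤ n := Nat.cast_nonneg n
        have : -γ ≤ α := le_max_left _ _
        have h3 : -γ * n ≤ α * n := mul_le_mul_of_nonneg_right this hn
        have h4 : -δ ≤ |δ| := neg_le_abs δ
        simp only [hKdef]; nlinarith
      · have : (0:ℝ) ≤ α * n := by positivity
        simp only [hKdef]; linarith
    have h5 : |(Gamma (γ * n + δ))⁻¹| ≤ 3 * Gamma (α * n + K) := by nlinarith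
    rw [div_eq_mul_inv, mul_comm (3 * Gamma (α * n + K))]
    exact mul_le_mul_of_nonneg_left h5 (by positivity)
  have hu : Summable u := by
    have h := (summable_majorant hα0 hα1 hK hR).mul_left 3
    apply h.congr
    intro n
    simp only [hudef]
    ring
  have hgderiv : ∀ n y, HasDerivAt (g n) (g' n y) y := fun n y =>
    (hasDerivAt_pow n y).div_const _
  have hbound : ∀ n y, y ∈ Metric.ball (0:ℝ) R → ‖g' n y‖ ≤ u n := by
    intro n y hy
    have hyR : |y| ≤ R := by
      have := Metric.mem_ball.mp hy
      rw [Real.dist_eq, sub_zero] at this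
      linarith
    have h1 : ‖g' n y‖ = (n : ℝ) * |y| ^ (n - 1) *
        |(((n.factorial : ℝ) * Gamma (γ * n + δ)))⁻¹| := by
      simp only [hg'def, Real.norm_eq_abs, div_eq_mul_inv, abs_mul, abs_pow,
        Nat.abs_cast]
    rw [h1]
    have h2 : |y| ^ (n - 1) ≤ R ^ n := by
      calc |y| ^ (n - 1) ≤ R ^ (n - 1) := pow_le_pow_left₀ (abs_nonneg y) hyR _
        _ ≤ R ^ n := pow_le_pow_right₀ hR (Nat.sub_le n 1)
    have h3 := hcbound n
    have hn0 : (0:ℝ) ≤ n := Nat.cast_nonneg n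
    have habsinv : (0:ℝ) ≤ |(((n.factorial : ℝ) * Gamma (γ * n + δ)))⁻¹| := abs_nonneg _
    calc (n : ℝ) * |y| ^ (n - 1) * |(((n.factorial : ℝ) * Gamma (γ * n + δ)))⁻¹|
        ≤ (n : ℝ) * R ^ n * (3 * Gamma (α * n + K) / n.factorial) := by
          apply mul_le_mul
          · exact mul_le_mul_of_nonneg_left h2 hn0
          · exact h3
          · exact habsinv
          · positivity
      _ = u n := by simp only [hudef]; ring
  have hsum0 : Summable (fun n => g n 0) := by
    apply summable_of_ne_finset_zero (s := ({0} : Finset ℕ))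
    intro n hn
    have hn0 : n ≠ 0 := by simpa using hn
    simp only [hgdef]
    rw [zero_pow hn0, zero_div]
  have hmem : z ∈ Metric.ball (0:ℝ) R := by
    rw [Metric.mem_ball, Real.dist_eq, sub_zero]
    simp only [hRdef]; linarith
  have hmem0 : (0:ℝ) ∈ Metric.ball (0:ℝ) R := by
    rw [Metric.mem_ball, dist_self]; linarith
  have H := hasDerivAt_tsum_of_isPreconnected hu Metric.isOpen_ball
    (convex_ball (0:ℝ) R).isPreconnected (fun n y _ => hgderiv n y) hbound hmem0 hsum0 hmem
  have hsum' : Summable (fun n => g' n z) :=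
    Summable.of_norm_bounded hu (fun n => hbound n z hmem)
  have hval : ∑' n, g' n z = wright γ (γ + δ) z := by
    rw [Summable.tsum_eq_zero_add hsum']
    have h0 : g' 0 z = 0 := by simp [hg'def]
    rw [h0, zero_add, wright]
    apply tsum_congr
    intro n
    have hfa : ((n + 1).factorial : ℝ) = ((n : ℝ) + 1) * n.factorial := by
      rw [Nat.factorial_succ]; push_cast; ring
    have harg : γ * ((n : ℕ) + 1 : ℕ) + δ = γ * n + (γ + δ) := by push_cast; ring
    simp only [hg'def]
    rw [hfa]
    have hn1 : ((n : ℝ) + 1) ≠ 0 := by positivity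
    have : ((n + 1 : ℕ) : ℝ) = (n : ℝ) + 1 := by push_cast; ring
    rw [this]
    have hpow : (n + 1 - 1 : ℕ) = n := by omega
    rw [hpow]
    rw [show γ * ((n : ℝ) + 1) + δ = γ * n + (γ + δ) by ring]
    rw [show ((n:ℝ) + 1) * z ^ n / (((n:ℝ) + 1) * (n.factorial) * Gamma (γ * n + (γ + δ)))
        = z ^ n / ((n.factorial) * Gamma (γ * n + (γ + δ))) by
      rw [mul_assoc, mul_div_mul_left _ _ hn1]]
  rw [← hval]
  exact H
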